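/- Let K be an algebraically closed field, let K_♭ ⊆ K be a ♭-section, let N ≤ SL₂(K) be the subgroup of monomial matrices, and for α ∈ K let g_α = [[1, α],[1, 1+α]] ∈ SL₂(K). Then for every A ∈ SL₂(K) exactly one of the following holds: (i) A ∈ N; (ii) there exists a unique α ∈ K_♭ such that A = n₁ * g_α * n₂ for some n₁, n₂ ∈ N. (In other words, SL₂(K) is the disjoint union of N and the pairwise distinct double cosets N g_α N, α ∈ K_♭.) -/

import Mathlib

open Matrix

/-- A matrix in `SL₂(K)` is monomial if it is diagonal or antidiagonal. -/
def IsMonomial {K : Type*} [Field K] (A : SpecialLinearGroup (Fin 2) K) : Prop :=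
  ((A : Matrix (Fin 2) (Fin 2) K) 0 1 = 0 ∧ (A : Matrix (Fin 2) (Fin 2) K) 1 0 = 0) ∨
  ((A : Matrix (Fin 2) (Fin 2) K) 0 0 = 0 ∧ (A : Matrix (Fin 2) (Fin 2) K) 1 1 = 0)

/-- The matrix `g_α = [[1, α],[1, 1+α]] ∈ SL₂(K)`. -/
def gMat {K : Type*} [Field K] (α : K) : SpecialLinearGroup (Fin 2) K :=
  ⟨!![1, α; 1, 1 + α], by rw [Matrix.det_fin_two_of]; ring⟩

/-- A ♭-section of `K`. -/
def IsFlatSection {K : Type*} [Field K] (S : Set K) : Prop :=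
  (0 : K) ∈ S ∧ (∀ α : K, α ∈ S ∨ (-1 - α) ∈ S) ∧
    (∀ α : K, α ∈ S → (-1 - α) ∈ S → α = -1 - α)

namespace SL2Aux

variable {K : Type*} [Field K]

lemma mul_entry (A B : SpecialLinearGroup (Fin 2) K) (i j : Fin 2) :
    ((A * B) : Matrix (Fin 2) (Fin 2) K) i j = A.1 i 0 * B.1 0 j + A.1 i 1 * B.1 1 j := by
  simp [Matrix.mul_apply, Fin.sum_univ_two]

lemma det_rel (A : SpecialLinearGroup (Fin 2) K) :
    A.1 0 0 * A.1 1 1 - A.1 0 1 * A.1 1 0 = 1 := by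
  have := A.2; rwa [Matrix.det_fin_two] at this

/-- a diagonal element of `N` -/
def dMat (s : K) (hs : s ≠ 0) : SpecialLinearGroup (Fin 2) K :=
  ⟨!![s, 0; 0, s⁻¹], by rw [Matrix.det_fin_two_of]; field_simp; ring⟩

/-- an antidiagonal element of `N` -/
def wMat (s : K) (hs : s ≠ 0) : SpecialLinearGroup (Fin 2) K :=
  ⟨!![0, s; -s⁻¹, 0], by rw [Matrix.det_fin_two_of]; field_simp; ring⟩

lemma dMat_monomial (s : K) (hs : s ≠ 0) : IsMonomial (dMat s hs) := by
  left; constructor <;> simp [dMat]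

lemma wMat_monomial (s : K) (hs : s ≠ 0) : IsMonomial (wMat s hs) := by
  right; constructor <;> simp [wMat]

lemma monomial_mul {n₁ n₂ : SpecialLinearGroup (Fin 2) K}
    (h₁ : IsMonomial n₁) (h₂ : IsMonomial n₂) : IsMonomial (n₁ * n₂) := by
  rcases h₁ with ⟨a1, a2⟩ | ⟨a1, a2⟩ <;> rcases h₂ with ⟨b1, b2⟩ | ⟨b1, b2⟩
  · exact Or.inl ⟨by simp [Matrix.SpecialLinearGroup.coe_mul, mul_entry, a1, b1],
      by simp [Matrix.SpecialLinearGroup.coe_mul, mul_entry, a2, b2]⟩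
  · exact Or.inr ⟨by simp [Matrix.SpecialLinearGroup.coe_mul, mul_entry, a1, b1],
      by simp [Matrix.SpecialLinearGroup.coe_mul, mul_entry, a2, b2]⟩
  · exact Or.inr ⟨by simp [Matrix.SpecialLinearGroup.coe_mul, mul_entry, a1, b2],
      by simp [Matrix.SpecialLinearGroup.coe_mul, mul_entry, a2, b1]⟩
  · exact Or.inl ⟨by simp [Matrix.SpecialLinearGroup.coe_mul, mul_entry, a1, b2],
      by simp [Matrix.SpecialLinearGroup.coe_mul, mul_entry, a2, b1]⟩

lemma monomial_inv {n : SpecialLinearGroup (Fin 2) K} (h : IsMonomial n) :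
    IsMonomial n⁻¹ := by
  rcases h with ⟨a1, a2⟩ | ⟨a1, a2⟩
  · left
    constructor <;> rw [Matrix.SpecialLinearGroup.coe_inv, Matrix.adjugate_fin_two] <;>
      simp [a1, a2]
  · right
    constructor <;> rw [Matrix.SpecialLinearGroup.coe_inv, Matrix.adjugate_fin_two] <;>
      simp [a1, a2]

lemma gMat_not_monomial (α : K) : ¬ IsMonomial (gMat α) := by
  rintro (⟨-, h⟩ | ⟨h, -⟩) <;> simp [gMat] at h

/-- the invariant `a·b·c·d` of a matrix `[[a,b],[c,d]]` -/
def invar (A : SpecialLinearGroup (Fin 2) K) : K :=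
  A.1 0 0 * A.1 0 1 * A.1 1 0 * A.1 1 1

lemma invar_mul_left {n : SpecialLinearGroup (Fin 2) K} (h : IsMonomial n)
    (A : SpecialLinearGroup (Fin 2) K) : invar (n * A) = invar A := by
  have hd := det_rel n
  rcases h with ⟨a1, a2⟩ | ⟨a1, a2⟩
  · rw [a1, a2] at hd
    simp only [invar, Matrix.SpecialLinearGroup.coe_mul, mul_entry, a1, a2, zero_mul, mul_zero,
      add_zero, zero_add]
    linear_combination (n.1 0 0 * n.1 1 1 + 1) * (A.1 0 0 * A.1 0 1 * A.1 1 0 * A.1 1 1) * hd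
  · rw [a1, a2] at hd
    simp only [invar, Matrix.SpecialLinearGroup.coe_mul, mul_entry, a1, a2, zero_mul, mul_zero,
      add_zero, zero_add]
    linear_combination (1 - n.1 0 1 * n.1 1 0) * (A.1 0 0 * A.1 0 1 * A.1 1 0 * A.1 1 1) * hd

lemma invar_mul_right {n : SpecialLinearGroup (Fin 2) K} (h : IsMonomial n)
    (A : SpecialLinearGroup (Fin 2) K) : invar (A * n) = invar A := by
  have hd := det_rel n
  rcases h with ⟨a1, a2⟩ | ⟨a1, a2⟩
  · rw [a1, a2] at hd
    simp only [invar, Matrix.SpecialLinearGroup.coe_mul, mul_entry, a1, a2, zero_mul, mul_zero,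
      add_zero, zero_add]
    linear_combination (n.1 0 0 * n.1 1 1 + 1) * (A.1 0 0 * A.1 0 1 * A.1 1 0 * A.1 1 1) * hd
  · rw [a1, a2] at hd
    simp only [invar, Matrix.SpecialLinearGroup.coe_mul, mul_entry, a1, a2, zero_mul, mul_zero,
      add_zero, zero_add]
    linear_combination (1 - n.1 0 1 * n.1 1 0) * (A.1 0 0 * A.1 0 1 * A.1 1 0 * A.1 1 1) * hd

lemma invar_gMat (α : K) : invar (gMat α) = α * (1 + α) := by
  simp [invar, gMat]

/-- membership in the double coset `N g_γ N` -/
def InCoset (A : SpecialLinearGroup (Fin 2) K) (γ : K) : Prop :=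
  ∃ n₁ n₂ : SpecialLinearGroup (Fin 2) K,
    IsMonomial n₁ ∧ IsMonomial n₂ ∧ A = n₁ * gMat γ * n₂

lemma invar_of_inCoset {A : SpecialLinearGroup (Fin 2) K} {γ : K}
    (h : InCoset A γ) : invar A = γ * (1 + γ) := by
  obtain ⟨n₁, n₂, h1, h2, rfl⟩ := h
  rw [invar_mul_right h2, invar_mul_left h1, invar_gMat]

/-- main computation: a matrix with nonzero first-column entries lies in `N g_{bc} N`. -/
lemma inCoset_of_col [IsAlgClosed K] (A : SpecialLinearGroup (Fin 2) K)
    (ha : A.1 0 0 ≠ 0) (hc : A.1 1 0 ≠ 0) : InCoset A (A.1 0 1 * A.1 1 0) := by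
  obtain ⟨t, ht⟩ := IsAlgClosed.exists_pow_nat_eq ((A.1 0 0 * A.1 1 0)⁻¹) (n := 2) (by norm_num)
  have ht0 : t ≠ 0 := by
    intro h; rw [h] at ht; simp at ht
    exact (mul_ne_zero ha hc) (by simpa using ht.symm)
  have ht' : A.1 0 0 * A.1 1 0 * t ^ 2 = 1 := by
    rw [ht]; field_simp
  have hd := det_rel A
  refine ⟨dMat (A.1 0 0 * t) (mul_ne_zero ha ht0), dMat t⁻¹ (inv_ne_zero ht0),
    dMat_monomial _ _, dMat_monomial _ _, ?_⟩
  ext i j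
  fin_cases i <;> fin_cases j <;> simp only [Matrix.SpecialLinearGroup.coe_mul] <;>
    simp [Matrix.SpecialLinearGroup.coe_mul, Matrix.mul_apply, Fin.sum_univ_two, dMat, gMat]
  · rw [mul_assoc, mul_inv_cancel₀ ht0, mul_one]
  · linear_combination (-(A.1 0 1)) * ht'
  · field_simp
    linear_combination ht'
  · field_simp
    linear_combination hd

/-- `N g_γ N = N g_{-1-γ} N`. -/
lemma inCoset_flip [IsAlgClosed K] {A : SpecialLinearGroup (Fin 2) K} {γ : K}
    (h : InCoset A γ) : InCoset A (-1 - γ) := by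
  obtain ⟨t, ht⟩ := IsAlgClosed.exists_pow_nat_eq (-1 : K) (n := 2) (by norm_num)
  have ht0 : t ≠ 0 := by
    intro h; rw [h] at ht; simp at ht
  have key : gMat (-1 - γ) = wMat t⁻¹ (inv_ne_zero ht0) * gMat γ * dMat t ht0 := by
    ext i j
    fin_cases i <;> fin_cases j <;> simp only [Matrix.SpecialLinearGroup.coe_mul] <;>
      simp [Matrix.SpecialLinearGroup.coe_mul, Matrix.mul_apply, Fin.sum_univ_two, dMat, wMat,
        gMat]
    · exact (inv_mul_cancel₀ ht0).symm
    · field_simp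
      linear_combination (-1 - γ) * ht
    · linear_combination ht
    · field_simp
      ring
  obtain ⟨n₁, n₂, h1, h2, rfl⟩ := h
  have hg : gMat γ = (wMat t⁻¹ (inv_ne_zero ht0))⁻¹ * gMat (-1 - γ) * (dMat t ht0)⁻¹ := by
    rw [key]; group
  refine ⟨n₁ * (wMat t⁻¹ (inv_ne_zero ht0))⁻¹, (dMat t ht0)⁻¹ * n₂,
    monomial_mul h1 (monomial_inv (wMat_monomial _ _)),
    monomial_mul (monomial_inv (dMat_monomial _ _)) h2, ?_⟩
  rw [hg]; group

end SL2Aux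

open SL2Aux in
/-- `SL₂(K)` is the disjoint union of `N` and the pairwise distinct double cosets
`N g_α N`, `α ∈ K_♭`. -/
theorem SL2_double_coset_decomposition {K : Type*} [Field K] [IsAlgClosed K]
    (S : Set K) (hS : IsFlatSection S) (A : SpecialLinearGroup (Fin 2) K) :
    Xor' (IsMonomial A)
      (∃! α : K, α ∈ S ∧ ∃ n₁ n₂ : SpecialLinearGroup (Fin 2) K,
        IsMonomial n₁ ∧ IsMonomial n₂ ∧ A = n₁ * gMat α * n₂) := by
  by_cases hA : IsMonomial A
  · left
    refine ⟨hA, ?_⟩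
    rintro ⟨α, ⟨-, n₁, n₂, h1, h2, hEq⟩, -⟩
    refine gMat_not_monomial α ?_
    have hg : gMat α = n₁⁻¹ * A * n₂⁻¹ := by rw [hEq]; group
    rw [hg]
    exact monomial_mul (monomial_mul (monomial_inv h1) hA) (monomial_inv h2)
  · right
    refine ⟨?_, hA⟩
    have hd := det_rel A
    obtain ⟨β, hβ⟩ : ∃ β : K, β = A.1 0 1 * A.1 1 0 := ⟨_, rfl⟩
    -- A lies in N g_β N
    have hcos : InCoset A β := by
      rw [hβ]
      by_cases ha : A.1 0 0 = 0
      · -- a = 0 : then b ≠ 0 and d ≠ 0; use A * w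
        have hb : A.1 0 1 ≠ 0 := by
          intro hb; rw [ha, hb] at hd; simp at hd
        have hdne : A.1 1 1 ≠ 0 := by
          intro hdd; exact hA (Or.inr ⟨ha, hdd⟩)
        have hBcos := inCoset_of_col (A * wMat (1:K) one_ne_zero)
          (by simp only [Matrix.SpecialLinearGroup.coe_mul]; simp [Matrix.SpecialLinearGroup.coe_mul, wMat, Matrix.mul_apply, Fin.sum_univ_two]; exact hb)
          (by simp only [Matrix.SpecialLinearGroup.coe_mul]; simp [Matrix.SpecialLinearGroup.coe_mul, wMat, Matrix.mul_apply, Fin.sum_univ_two]; exact hdne)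
        have harg : (A * wMat (1:K) one_ne_zero).1 0 1 *
            (A * wMat (1:K) one_ne_zero).1 1 0 = -1 - A.1 0 1 * A.1 1 0 := by
          simp only [Matrix.SpecialLinearGroup.coe_mul]
          simp [Matrix.SpecialLinearGroup.coe_mul, wMat, Matrix.mul_apply, Fin.sum_univ_two]
          linear_combination -hd
        rw [harg] at hBcos
        obtain ⟨n₁, n₂, h1, h2, hEq⟩ := hBcos
        have hAeq : A = n₁ * gMat (-1 - A.1 0 1 * A.1 1 0) * (n₂ * (wMat (1:K) one_ne_zero)⁻¹) := by
          have h0 : A = (A * wMat (1:K) one_ne_zero) * (wMat (1:K) one_ne_zero)⁻¹ := by group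
          conv_lhs => rw [h0, hEq]
          group
        have : InCoset A (-1 - A.1 0 1 * A.1 1 0) :=
          ⟨n₁, n₂ * (wMat (1:K) one_ne_zero)⁻¹, h1,
            monomial_mul h2 (monomial_inv (wMat_monomial _ _)), hAeq⟩
        have hflip := inCoset_flip this
        have : -1 - (-1 - A.1 0 1 * A.1 1 0) = A.1 0 1 * A.1 1 0 := by ring
        rwa [this] at hflip
      · by_cases hc : A.1 1 0 = 0
        · -- c = 0 : then b ≠ 0 and d ≠ 0; use A * w
          have hb : A.1 0 1 ≠ 0 := by
            intro hb; exact hA (Or.inl ⟨hb, hc⟩)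
          have hdne : A.1 1 1 ≠ 0 := by
            intro hdd; rw [hc, hdd] at hd; simp at hd
          have hBcos := inCoset_of_col (A * wMat (1:K) one_ne_zero)
            (by simp only [Matrix.SpecialLinearGroup.coe_mul]; simp [Matrix.SpecialLinearGroup.coe_mul, wMat, Matrix.mul_apply, Fin.sum_univ_two]; exact hb)
            (by simp only [Matrix.SpecialLinearGroup.coe_mul]; simp [Matrix.SpecialLinearGroup.coe_mul, wMat, Matrix.mul_apply, Fin.sum_univ_two]; exact hdne)
          have harg : (A * wMat (1:K) one_ne_zero).1 0 1 *
              (A * wMat (1:K) one_ne_zero).1 1 0 = -1 - A.1 0 1 * A.1 1 0 := by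
            simp only [Matrix.SpecialLinearGroup.coe_mul]
            simp [Matrix.SpecialLinearGroup.coe_mul, wMat, Matrix.mul_apply, Fin.sum_univ_two]
            linear_combination -hd
          rw [harg] at hBcos
          obtain ⟨n₁, n₂, h1, h2, hEq⟩ := hBcos
          have hAeq : A = n₁ * gMat (-1 - A.1 0 1 * A.1 1 0) * (n₂ * (wMat (1:K) one_ne_zero)⁻¹) := by
            have h0 : A = (A * wMat (1:K) one_ne_zero) * (wMat (1:K) one_ne_zero)⁻¹ := by group
            conv_lhs => rw [h0, hEq]
            group
          have : InCoset A (-1 - A.1 0 1 * A.1 1 0) :=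
            ⟨n₁, n₂ * (wMat (1:K) one_ne_zero)⁻¹, h1,
              monomial_mul h2 (monomial_inv (wMat_monomial _ _)), hAeq⟩
          have hflip := inCoset_flip this
          have : -1 - (-1 - A.1 0 1 * A.1 1 0) = A.1 0 1 * A.1 1 0 := by ring
          rwa [this] at hflip
        · exact inCoset_of_col A ha hc
    -- pick the representative in S
    obtain ⟨α, hαS, hαcos⟩ : ∃ α, α ∈ S ∧ InCoset A α := by
      rcases hS.2.1 β with h | h
      · exact ⟨β, h, hcos⟩
      · exact ⟨-1 - β, h, inCoset_flip hcos⟩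
    refine ⟨α, ⟨hαS, hαcos⟩, ?_⟩
    rintro α' ⟨hα'S, hα'cos⟩
    have e1 : invar A = α * (1 + α) := invar_of_inCoset hαcos
    have e2 : invar A = α' * (1 + α') := invar_of_inCoset hα'cos
    have hz : (α' - α) * (α' + α + 1) = 0 := by linear_combination e1 - e2
    rcases mul_eq_zero.mp hz with h | h
    · exact sub_eq_zero.mp h
    · have hα' : α' = -1 - α := by linear_combination h
      have := hS.2.2 α hαS (hα' ▸ hα'S)
      rw [hα', ← this]
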